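/- Suppose $n = m(m+1)$ with $m \geq 1$, so $\Delta_n$ is reducible. Then the group of unitary units $U(\Lambda_n)$ of $\Lambda_n = \mathbb{Z}[t,t^{-1}]/(\Delta_n)$ is isomorphic (via $t \mapsto m/(m+1)$, i.e. projection onto the first coordinate of the splitting $\Lambda_n \hookrightarrow \mathbb{Z}[1/n]\oplus\mathbb{Z}[1/n]$) to the group $T = \{x \in \mathbb{Z}[1/n]^\times : x - x^{-1} \in (2m+1)\cdot\mathbb{Z}[1/n]\}$. -/

import Mathlib

open LaurentPolynomial in
/-- `Δₙ = n t² - (2n+1) t + n` as a Laurent polynomial over `ℤ`. -/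
noncomputable def DeltaL (n : ℤ) : LaurentPolynomial ℤ :=
  LaurentPolynomial.C n * T 2 - LaurentPolynomial.C (2 * n + 1) * T 1 + LaurentPolynomial.C n

/-- `Λₙ = ℤ[t,t⁻¹]/(Δₙ)`. -/
abbrev Lam (n : ℤ) := LaurentPolynomial ℤ ⧸ Ideal.span {DeltaL n}

/-- The quotient map `ℤ[t,t⁻¹] → Λₙ`. -/
noncomputable abbrev Qmk (n : ℤ) : LaurentPolynomial ℤ →+* Lam n :=
  Ideal.Quotient.mk (Ideal.span {DeltaL n})

/-- `ℤ[1/n]`, the localization of `ℤ` inverting `n = m(m+1)`. -/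
abbrev ZInv (m : ℤ) := Localization.Away ((m * (m + 1) : ℤ))

namespace S17

open LaurentPolynomial

/-- Evaluation of an integer Laurent polynomial at a unit of a commutative ring. -/
noncomputable def evalU {R : Type*} [CommRing R] (x : Rˣ) : LaurentPolynomial ℤ →+* R :=
  ((AddMonoidAlgebra.lift ℤ R ℤ) ((Units.coeHom R).comp (zpowersHom Rˣ x))).toRingHom

section evalU

variable {R : Type*} [CommRing R]

@[simp] theorem evalU_T (x : Rˣ) (a : ℤ) : evalU x (T a) = ↑(x ^ a) := by
  have h : (T a : LaurentPolynomial ℤ) = AddMonoidAlgebra.single a (1 : ℤ) := rfl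
  rw [evalU, AlgHom.toRingHom_eq_coe, RingHom.coe_coe, h, AddMonoidAlgebra.lift_single]
  simp

@[simp] theorem evalU_C (x : Rˣ) (r : ℤ) : evalU x (LaurentPolynomial.C r) = (r : R) := by
  have h : (LaurentPolynomial.C r : LaurentPolynomial ℤ) = AddMonoidAlgebra.single 0 r := rfl
  rw [evalU, AlgHom.toRingHom_eq_coe, RingHom.coe_coe, h, AddMonoidAlgebra.lift_single]
  simp

/-- Ring homomorphisms out of `ℤ[t,t⁻¹]` agree if they agree on `T 1` and `T (-1)`. -/
theorem laurentHom_ext {S : Type*} [CommRing S] {f g : LaurentPolynomial ℤ →+* S}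
    (h1 : f (T 1) = g (T 1)) (hm1 : f (T (-1)) = g (T (-1))) : f = g := by
  have key : ∀ a : ℤ, f (T a) = g (T a) := by
    intro a
    induction a using Int.induction_on with
    | zero => simp
    | succ k ih => rw [T_add, map_mul, map_mul, ih, h1]
    | pred k ih => rw [show -(k : ℤ) - 1 = -(k : ℤ) + (-1) by ring, T_add, map_mul, map_mul, ih, hm1]
  refine AddMonoidAlgebra.ringHom_ext ?_ (fun a => key a)
  intro b
  have hb : (AddMonoidAlgebra.single (0 : ℤ) b : LaurentPolynomial ℤ) = LaurentPolynomial.C b := rfl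
  rw [hb, eq_intCast LaurentPolynomial.C b, map_intCast, map_intCast]

theorem evalU_comp {S : Type*} [CommRing S] (g : R →+* S) (x : Rˣ) :
    g.comp (evalU x) = evalU (Units.map (g : R →* S) x) := by
  refine laurentHom_ext ?_ ?_ <;> simp

theorem evalU_toLaurent (x : Rˣ) (P : Polynomial ℤ) :
    evalU x (Polynomial.toLaurent P) = Polynomial.eval₂ (Int.castRingHom R) (↑x) P := by
  have h : (evalU x).comp Polynomial.toLaurent
      = Polynomial.eval₂RingHom (Int.castRingHom R) (↑x : R) := by
    apply Polynomial.ringHom_ext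
    · intro a
      simp [Polynomial.toLaurent_C]
    · simp [Polynomial.toLaurent_X]
  have h2 := RingHom.congr_fun h P
  simpa using h2

end evalU

section PolyPart

open Polynomial

/-- The polynomial `n X² - (2n+1) X + n`. -/
noncomputable def Dpoly (n : ℤ) : Polynomial ℤ :=
  Polynomial.C n * X ^ 2 - Polynomial.C (2 * n + 1) * X + Polynomial.C n

noncomputable def Apoly (m : ℤ) : Polynomial ℤ := Polynomial.C (m + 1) * X - Polynomial.C m

noncomputable def Bpoly (m : ℤ) : Polynomial ℤ := Polynomial.C m * X - Polynomial.C (m + 1)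

theorem toLaurent_Dpoly (n : ℤ) : (Dpoly n).toLaurent = DeltaL n := by
  simp only [Dpoly, DeltaL, map_add, map_sub, map_mul, Polynomial.toLaurent_C,
    Polynomial.toLaurent_X_pow, Polynomial.toLaurent_X]
  norm_num

theorem Dpoly_factor (m : ℤ) : Dpoly (m * (m + 1)) = Apoly m * Bpoly m := by
  simp only [Dpoly, Apoly, Bpoly, map_add, map_mul, map_one, map_ofNat]
  ring

theorem Apoly_isPrimitive (m : ℤ) : (Apoly m).IsPrimitive := by
  intro r hr
  rw [Polynomial.C_dvd_iff_dvd_coeff] at hr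
  have hc1 : (Apoly m).coeff 1 = m + 1 := by
    simp only [Apoly, coeff_sub, coeff_C_mul, coeff_X_one, coeff_C, mul_one]
    norm_num
  have hc0 : (Apoly m).coeff 0 = -m := by
    simp only [Apoly, coeff_sub, coeff_C_mul, coeff_X_zero, coeff_C, mul_zero]
    norm_num
  have h1 : r ∣ m + 1 := hc1 ▸ hr 1
  have h0 : r ∣ -m := hc0 ▸ hr 0
  have : r ∣ 1 := by
    have := dvd_add h1 h0
    simpa using this
  exact isUnit_of_dvd_one this

theorem Bpoly_isPrimitive (m : ℤ) : (Bpoly m).IsPrimitive := by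
  intro r hr
  rw [Polynomial.C_dvd_iff_dvd_coeff] at hr
  have hc1 : (Bpoly m).coeff 1 = m := by
    simp only [Bpoly, coeff_sub, coeff_C_mul, coeff_X_one, coeff_C, mul_one]
    norm_num
  have hc0 : (Bpoly m).coeff 0 = -(m + 1) := by
    simp only [Bpoly, coeff_sub, coeff_C_mul, coeff_X_zero, coeff_C, mul_zero]
    norm_num
  have h1 : r ∣ m := hc1 ▸ hr 1
  have h0 : r ∣ -(m + 1) := hc0 ▸ hr 0
  have : r ∣ 1 := by
    have := dvd_add h1 h0
    simpa using this
  exact isUnit_of_dvd_one this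

theorem primitive_dvd_of_map_dvd (A P : Polynomial ℤ) (hA : A.IsPrimitive)
    (h : A.map (algebraMap ℤ ℚ) ∣ P.map (algebraMap ℤ ℚ)) : A ∣ P := by
  by_cases hP : P = 0
  · simp [hP]
  rw [← hA.dvd_primPart_iff_dvd hP]
  apply hA.dvd_of_fraction_map_dvd_fraction_map (K := ℚ)
  have hcont : ((P.content : ℚ)) ≠ 0 := by
    exact_mod_cast fun hc => hP (Polynomial.content_eq_zero_iff.mp (by exact_mod_cast hc))
  have hmap : P.map (algebraMap ℤ ℚ)
      = Polynomial.C ((P.content : ℚ)) * (P.primPart.map (algebraMap ℤ ℚ)) := by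
    conv_lhs => rw [P.eq_C_content_mul_primPart]
    simp [Polynomial.map_mul]
  rw [hmap] at h
  exact ((Polynomial.isUnit_C.mpr (isUnit_iff_ne_zero.mpr hcont)).dvd_mul_left).mp h

theorem linear_primitive_dvd (A : Polynomial ℤ) (hA : A.IsPrimitive) (c u : ℚ) (hc : c ≠ 0)
    (hfac : A.map (algebraMap ℤ ℚ) = Polynomial.C c * (X - Polynomial.C u)) (P : Polynomial ℤ)
    (hroot : Polynomial.aeval u P = 0) : A ∣ P := by
  apply primitive_dvd_of_map_dvd A P hA
  rw [hfac]
  rw [(Polynomial.isUnit_C.mpr (isUnit_iff_ne_zero.mpr hc)).mul_left_dvd]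
  refine Polynomial.dvd_iff_isRoot.mpr ?_
  rw [Polynomial.IsRoot, Polynomial.eval_map, ← Polynomial.aeval_def, hroot]

theorem Apoly_map_factor (m : ℤ) (u : ℚ) (hmne : ((m : ℚ) + 1) ≠ 0)
    (hu : u * ((m : ℚ) + 1) = m) :
    (Apoly m).map (algebraMap ℤ ℚ) = Polynomial.C ((m : ℚ) + 1) * (X - Polynomial.C u) := by
  simp only [Apoly, Polynomial.map_sub, Polynomial.map_mul, Polynomial.map_C, Polynomial.map_X]
  simp only [eq_intCast, Int.cast_add, Int.cast_one]
  rw [mul_sub, ← Polynomial.C_mul, mul_comm ((m : ℚ) + 1) u, hu]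

theorem Bpoly_map_factor (m : ℤ) (v : ℚ) (hmne : (m : ℚ) ≠ 0)
    (hv : v * (m : ℚ) = (m : ℚ) + 1) :
    (Bpoly m).map (algebraMap ℤ ℚ) = Polynomial.C ((m : ℚ)) * (X - Polynomial.C v) := by
  simp only [Bpoly, Polynomial.map_sub, Polynomial.map_mul, Polynomial.map_C, Polynomial.map_X]
  simp only [eq_intCast, Int.cast_add, Int.cast_one]
  rw [mul_sub, ← Polynomial.C_mul, mul_comm ((m : ℚ)) v, hv]

/-- The key kernel computation: an integer polynomial vanishing at `u = m/(m+1)` and at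
`u⁻¹ = (m+1)/m` is divisible by `Dpoly (m(m+1))`. -/
theorem Dpoly_dvd_of_roots (m : ℤ) (hm : 1 ≤ m) (u : ℚ) (hu : u * ((m : ℚ) + 1) = m)
    (P : Polynomial ℤ) (h1 : Polynomial.aeval u P = 0) (h2 : Polynomial.aeval u⁻¹ P = 0) :
    Dpoly (m * (m + 1)) ∣ P := by
  have hmQ : (0 : ℚ) < (m : ℚ) := by exact_mod_cast lt_of_lt_of_le zero_lt_one hm
  have hm0 : (m : ℚ) ≠ 0 := ne_of_gt hmQ
  have hm1 : ((m : ℚ) + 1) ≠ 0 := by positivity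
  have hune : u ≠ 0 := by
    intro h
    rw [h, zero_mul] at hu
    exact hm0 hu.symm
  have hv : u⁻¹ * (m : ℚ) = (m : ℚ) + 1 := by
    have h' : u⁻¹ * (u * ((m : ℚ) + 1)) = (m : ℚ) + 1 := by
      rw [← mul_assoc, inv_mul_cancel₀ hune, one_mul]
    rw [hu] at h'
    exact h' 
  -- step A : Apoly ∣ P
  obtain ⟨Q, hQ⟩ : Apoly m ∣ P :=
    linear_primitive_dvd _ (Apoly_isPrimitive m) _ u hm1 (Apoly_map_factor m u hm1 hu) P h1
  -- step B : Bpoly ∣ Q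
  have hAv : (Polynomial.aeval u⁻¹ (Apoly m)) ≠ 0 := by
    have hval : Polynomial.aeval u⁻¹ (Apoly m) = ((m : ℚ) + 1) * u⁻¹ - m := by
      simp only [Apoly, map_sub, map_mul, Polynomial.aeval_X, Polynomial.aeval_C]
      simp only [eq_intCast, Int.cast_add, Int.cast_one]
    rw [hval]
    intro hcon
    have hmul : (((m : ℚ) + 1) * u⁻¹ - m) * m = 2 * m + 1 := by
      rw [sub_mul, mul_assoc, hv]
      ring
    rw [hcon, zero_mul] at hmul
    have : (0 : ℚ) < 2 * m + 1 := by linarith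
    rw [← hmul] at this
    exact lt_irrefl 0 this
  have hQroot : Polynomial.aeval u⁻¹ Q = 0 := by
    have := h2
    rw [hQ, map_mul] at this
    rcases mul_eq_zero.mp this with h | h
    · exact absurd h hAv
    · exact h
  obtain ⟨Q', hQ'⟩ : Bpoly m ∣ Q :=
    linear_primitive_dvd _ (Bpoly_isPrimitive m) _ u⁻¹ hm0 (Bpoly_map_factor m u⁻¹ hm0 hv) Q hQroot
  rw [Dpoly_factor, hQ, hQ']
  exact ⟨Q', by ring⟩

end PolyPart

section MSect

variable (m : ℤ)

noncomputable abbrev iz : ℤ →+* ZInv m := algebraMap ℤ (ZInv m)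

theorem isUnit_iz_m : IsUnit (iz m m) :=
  IsLocalization.Away.isUnit_of_dvd (S := ZInv m) (x := m * (m + 1)) ⟨m + 1, rfl⟩

theorem isUnit_iz_m1 : IsUnit (iz m (m + 1)) :=
  IsLocalization.Away.isUnit_of_dvd (S := ZInv m) (x := m * (m + 1)) ⟨m, mul_comm m (m + 1)⟩

noncomputable def uA : (ZInv m)ˣ := (isUnit_iz_m m).unit

noncomputable def uB : (ZInv m)ˣ := (isUnit_iz_m1 m).unit

theorem uA_val : ((uA m : (ZInv m)ˣ) : ZInv m) = iz m m := (isUnit_iz_m m).unit_spec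

theorem uB_val : ((uB m : (ZInv m)ˣ) : ZInv m) = iz m (m + 1) := (isUnit_iz_m1 m).unit_spec

noncomputable def wU : (ZInv m)ˣ := uA m * (uB m)⁻¹

theorem wU_mul : ((wU m : (ZInv m)ˣ) : ZInv m) * iz m (m + 1) = iz m m := by
  rw [← uB_val, ← uA_val, wU]
  rw [Units.val_mul, mul_assoc, Units.inv_mul, mul_one]

theorem wU_val : ((wU m : (ZInv m)ˣ) : ZInv m)
    = ((uA m : (ZInv m)ˣ) : ZInv m) * (((uB m)⁻¹ : (ZInv m)ˣ) : ZInv m) := rfl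

theorem sq_sub_one : (((uA m : (ZInv m)ˣ) : ZInv m) - ((uB m : (ZInv m)ˣ) : ZInv m)) ^ 2 = 1 := by
  rw [uA_val, uB_val, ← map_sub]
  have h : m - (m + 1) = -1 := by ring
  rw [h, map_neg, map_one]
  ring

theorem iz_mul_val : ((m * (m + 1) : ℤ) : ZInv m)
    = ((uA m : (ZInv m)ˣ) : ZInv m) * ((uB m : (ZInv m)ˣ) : ZInv m) := by
  rw [uA_val, uB_val, ← map_mul]
  exact (eq_intCast (iz m) (m * (m + 1))).symm

theorem evalU_DeltaL {R : Type*} [CommRing R] (x : Rˣ) (n : ℤ) :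
    evalU x (DeltaL n) = (n : R) * (x : R) ^ 2 - (2 * (n : R) + 1) * (x : R) + (n : R) := by
  rw [DeltaL, map_add, map_sub, map_mul, map_mul, evalU_C, evalU_C, evalU_T, evalU_T]
  have e2 : ((x ^ (2 : ℤ) : Rˣ) : R) = (x : R) ^ 2 := by
    rw [show (2 : ℤ) = ((2 : ℕ) : ℤ) from rfl, zpow_natCast, Units.val_pow_eq_pow_val]
  have e1 : ((x ^ (1 : ℤ) : Rˣ) : R) = (x : R) := by rw [zpow_one]
  rw [e2, e1]
  push_cast
  ring

theorem evalU_DeltaL_zero {R : Type*} [CommRing R] (A B : Rˣ) (n : ℤ)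
    (hn : (n : R) = (A : R) * (B : R)) (h : ((A : R) - (B : R)) ^ 2 = 1) :
    evalU (A * B⁻¹) (DeltaL n) = 0 := by
  rw [evalU_DeltaL, hn]
  have hw : ((A * B⁻¹ : Rˣ) : R) * (B : R) = (A : R) := by
    rw [Units.val_mul, mul_assoc, Units.inv_mul, mul_one]
  set x := ((A * B⁻¹ : Rˣ) : R) with hx
  linear_combination x * h + (x * (x * (B : R) - 2 * (B : R) + (A : R))
    - (B : R) * (x - 1) ^ 2) * hw

theorem evalU_w_Delta : evalU (wU m) (DeltaL (m * (m + 1))) = 0 :=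
  evalU_DeltaL_zero (uA m) (uB m) _ (iz_mul_val m) (sq_sub_one m)

theorem evalU_winv_Delta : evalU (wU m)⁻¹ (DeltaL (m * (m + 1))) = 0 := by
  have hinv : (wU m)⁻¹ = uB m * (uA m)⁻¹ := by
    rw [wU, mul_inv, inv_inv]
    exact mul_comm _ _
  rw [hinv]
  refine evalU_DeltaL_zero (uB m) (uA m) _ ?_ ?_
  · rw [iz_mul_val m]; ring
  · linear_combination sq_sub_one m

end MSect

section MSect2

variable (m : ℤ)

/-- The evaluation `Λₙ → ℤ[1/n]` at `m/(m+1)`. -/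
noncomputable def psi : Lam (m * (m + 1)) →+* ZInv m :=
  Ideal.Quotient.lift _ (evalU (wU m)) (by
    intro f hf
    rw [Ideal.mem_span_singleton] at hf
    obtain ⟨g, rfl⟩ := hf
    rw [map_mul, evalU_w_Delta, zero_mul])

/-- The evaluation `Λₙ → ℤ[1/n]` at `(m+1)/m`. -/
noncomputable def psi' : Lam (m * (m + 1)) →+* ZInv m :=
  Ideal.Quotient.lift _ (evalU (wU m)⁻¹) (by
    intro f hf
    rw [Ideal.mem_span_singleton] at hf
    obtain ⟨g, rfl⟩ := hf
    rw [map_mul, evalU_winv_Delta, zero_mul])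

@[simp] theorem psi_mk (f : LaurentPolynomial ℤ) :
    psi m (Qmk (m * (m + 1)) f) = evalU (wU m) f := rfl

@[simp] theorem psi'_mk (f : LaurentPolynomial ℤ) :
    psi' m (Qmk (m * (m + 1)) f) = evalU (wU m)⁻¹ f := rfl

theorem nQ_ne (hm : 1 ≤ m) : IsUnit (algebraMap ℤ ℚ (m * (m + 1))) := by
  rw [eq_intCast]
  refine isUnit_iff_ne_zero.mpr ?_
  have h1 : (0 : ℤ) < m * (m + 1) := by nlinarith
  exact_mod_cast ne_of_gt (by exact_mod_cast h1 : (0 : ℚ) < ((m * (m + 1) : ℤ) : ℚ))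

/-- The canonical map `ℤ[1/n] → ℚ`. -/
noncomputable def gQ (hm : 1 ≤ m) : ZInv m →+* ℚ :=
  IsLocalization.Away.lift (S := ZInv m) (g := algebraMap ℤ ℚ) (m * (m + 1)) (nQ_ne m hm)

theorem gQ_iz (hm : 1 ≤ m) (z : ℤ) : gQ m hm (iz m z) = (z : ℚ) := by
  rw [gQ, IsLocalization.Away.lift_eq, eq_intCast]

/-- The image of `w` in `ℚ`. -/
noncomputable def uQ (hm : 1 ≤ m) : ℚˣ := Units.map ((gQ m hm : ZInv m →* ℚ)) (wU m)

theorem uQ_mul (hm : 1 ≤ m) : ((uQ m hm : ℚˣ) : ℚ) * ((m : ℚ) + 1) = (m : ℚ) := by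
  have h := congrArg (gQ m hm) (wU_mul m)
  rw [map_mul, gQ_iz, gQ_iz] at h
  have hval : ((uQ m hm : ℚˣ) : ℚ) = gQ m hm ((wU m : (ZInv m)ˣ) : ZInv m) := rfl
  rw [hval]
  push_cast at h ⊢
  linarith [h]

theorem ker_lemma (hm : 1 ≤ m) (f : LaurentPolynomial ℤ)
    (h1 : evalU (wU m) f = 0) (h2 : evalU (wU m)⁻¹ f = 0) :
    DeltaL (m * (m + 1)) ∣ f := by
  set u : ℚˣ := uQ m hm with hu
  have hq1 : evalU u f = 0 := by
    have hc := RingHom.congr_fun (evalU_comp (gQ m hm) (wU m)) f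
    rw [RingHom.comp_apply, h1, map_zero] at hc
    exact hc.symm
  have hq2 : evalU u⁻¹ f = 0 := by
    have hc := RingHom.congr_fun (evalU_comp (gQ m hm) (wU m)⁻¹) f
    rw [RingHom.comp_apply, h2, map_zero] at hc
    have hmi : (Units.map ((gQ m hm : ZInv m →* ℚ))) (wU m)⁻¹ = u⁻¹ := by
      rw [hu, uQ]
      exact map_inv _ _
    rw [hmi] at hc
    exact hc.symm
  obtain ⟨k, P, hP⟩ := f.exists_T_pow
  have hPu : Polynomial.aeval ((u : ℚˣ) : ℚ) P = 0 := by
    have he := evalU_toLaurent u P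
    rw [hP, map_mul, hq1, zero_mul] at he
    rw [Polynomial.aeval_def, algebraMap_int_eq, ← he]
  have hPv : Polynomial.aeval (((u : ℚˣ) : ℚ))⁻¹ P = 0 := by
    have he := evalU_toLaurent u⁻¹ P
    rw [hP, map_mul, hq2, zero_mul] at he
    rw [Polynomial.aeval_def, algebraMap_int_eq, ← Units.val_inv_eq_inv_val, ← he]
  obtain ⟨Q, hQ⟩ := Dpoly_dvd_of_roots m hm ((u : ℚˣ) : ℚ) (uQ_mul m hm) P hPu hPv
  have hDT : DeltaL (m * (m + 1)) ∣ f * T (k : ℤ) := by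
    refine ⟨Q.toLaurent, ?_⟩
    rw [← hP, hQ, map_mul, toLaurent_Dpoly]
  exact ((isUnit_T (k : ℤ)).dvd_mul_right).mp hDT

theorem psi_inj (hm : 1 ≤ m) (x y : Lam (m * (m + 1)))
    (h1 : psi m x = psi m y) (h2 : psi' m x = psi' m y) : x = y := by
  obtain ⟨f, rfl⟩ := Ideal.Quotient.mk_surjective x
  obtain ⟨g, rfl⟩ := Ideal.Quotient.mk_surjective y
  rw [show (Ideal.Quotient.mk (Ideal.span {DeltaL (m * (m + 1))})) = Qmk (m * (m + 1)) from rfl]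
    at h1 h2 ⊢
  rw [psi_mk, psi_mk] at h1
  rw [psi'_mk, psi'_mk] at h2
  refine Ideal.Quotient.eq.mpr (Ideal.mem_span_singleton.mpr ?_)
  exact ker_lemma m hm (f - g) (by rw [map_sub, h1, sub_self]) (by rw [map_sub, h2, sub_self])

theorem wU_inv_eq : (wU m)⁻¹ = uB m * (uA m)⁻¹ := by
  rw [wU, mul_inv, inv_inv]
  exact mul_comm _ _

theorem uA_sub_uB : ((uA m : (ZInv m)ˣ) : ZInv m) - ((uB m : (ZInv m)ˣ) : ZInv m) = -1 := by
  rw [uA_val, uB_val, ← map_sub]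
  have h : m - (m + 1) = -1 := by ring
  rw [h, map_neg, map_one]

theorem winv_mul : (((wU m)⁻¹ : (ZInv m)ˣ) : ZInv m) * ((uA m : (ZInv m)ˣ) : ZInv m)
    = ((uB m : (ZInv m)ˣ) : ZInv m) := by
  rw [wU_inv_eq, Units.val_mul, mul_assoc, ← Units.val_mul, inv_mul_cancel, Units.val_one,
    mul_one]

theorem w_mul_b : ((wU m : (ZInv m)ˣ) : ZInv m) * ((uB m : (ZInv m)ˣ) : ZInv m)
    = ((uA m : (ZInv m)ˣ) : ZInv m) := by
  rw [wU, Units.val_mul, mul_assoc, ← Units.val_mul, inv_mul_cancel, Units.val_one, mul_one]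

theorem key_inv : (((wU m : (ZInv m)ˣ) : ZInv m) + (((wU m)⁻¹ : (ZInv m)ˣ) : ZInv m) - 2)
    * iz m (m * (m + 1)) = 1 := by
  have h1 := w_mul_b m
  have h2 := winv_mul m
  have h3 := sq_sub_one m
  have h4 : iz m (m * (m + 1)) = ((uA m : (ZInv m)ˣ) : ZInv m) * ((uB m : (ZInv m)ˣ) : ZInv m) := by
    rw [eq_intCast (iz m)]
    exact iz_mul_val m
  rw [h4]
  set a := ((uA m : (ZInv m)ˣ) : ZInv m)
  set b := ((uB m : (ZInv m)ˣ) : ZInv m)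
  set x := ((wU m : (ZInv m)ˣ) : ZInv m)
  set x' := (((wU m)⁻¹ : (ZInv m)ˣ) : ZInv m)
  linear_combination h3 + a * h1 + b * h2

theorem evalU_surj_of (x : (ZInv m)ˣ)
    (h : ((x : ZInv m) + ((x⁻¹ : (ZInv m)ˣ) : ZInv m) - 2) * iz m (m * (m + 1)) = 1) :
    Function.Surjective (evalU x) := by
  intro y
  obtain ⟨⟨z, s⟩, hzs⟩ := IsLocalization.surj (M := Submonoid.powers (m * (m + 1))) y
  obtain ⟨k, hk0⟩ := s.2
  have hk : (m * (m + 1)) ^ k = (s : ℤ) := hk0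
  have hinv : (evalU x) (T 1 + T (-1) - LaurentPolynomial.C 2) * iz m (m * (m + 1)) = 1 := by
    rw [map_sub, map_add, evalU_T, evalU_T, evalU_C, zpow_one]
    have hne : ((x ^ (-1 : ℤ) : (ZInv m)ˣ) : ZInv m) = ((x⁻¹ : (ZInv m)ˣ) : ZInv m) := by
      rw [zpow_neg, zpow_one]
    rw [hne]
    have h2 : ((2 : ℤ) : ZInv m) = (2 : ZInv m) := by norm_num
    rw [h2]
    exact h
  set r0 := (evalU x) (T 1 + T (-1) - LaurentPolynomial.C 2) with hr0
  have hy : y * (iz m (m * (m + 1))) ^ k = iz m z := by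
    rw [← map_pow, hk]
    exact hzs
  have hk' : ((iz m (m * (m + 1))) ^ k) * r0 ^ k = 1 := by
    rw [← mul_pow, mul_comm (iz m (m * (m + 1))) r0, hinv, one_pow]
  refine ⟨LaurentPolynomial.C z * (T 1 + T (-1) - LaurentPolynomial.C 2) ^ k, ?_⟩
  rw [map_mul, map_pow, evalU_C, ← hr0]
  symm
  calc y = y * (((iz m (m * (m + 1))) ^ k) * r0 ^ k) := by rw [hk', mul_one]
  _ = (y * (iz m (m * (m + 1))) ^ k) * r0 ^ k := by ring
  _ = iz m z * r0 ^ k := by rw [hy]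
  _ = (z : ZInv m) * r0 ^ k := by rw [eq_intCast (iz m) z]

theorem evalU_w_surjective : Function.Surjective (evalU (wU m)) :=
  evalU_surj_of m (wU m) (key_inv m)

theorem evalU_winv_surjective : Function.Surjective (evalU (wU m)⁻¹) := by
  refine evalU_surj_of m (wU m)⁻¹ ?_
  rw [inv_inv]
  linear_combination key_inv m

/-- the key divisibility `(2m+1) ∣ w - w⁻¹`. -/
theorem dvd_w_sub_winv : ((2 * m + 1 : ℤ) : ZInv m)
    ∣ ((wU m : (ZInv m)ˣ) : ZInv m) - (((wU m)⁻¹ : (ZInv m)ˣ) : ZInv m) := by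
  set a := ((uA m : (ZInv m)ˣ) : ZInv m)
  set b := ((uB m : (ZInv m)ˣ) : ZInv m)
  set x := ((wU m : (ZInv m)ˣ) : ZInv m)
  set x' := (((wU m)⁻¹ : (ZInv m)ˣ) : ZInv m)
  set nin := (((uA m * uB m)⁻¹ : (ZInv m)ˣ) : ZInv m) with hnin0
  have hw : x * b = a := w_mul_b m
  have hw' : x' * a = b := winv_mul m
  have hnin : (a * b) * nin = 1 := by
    rw [hnin0, ← Units.val_mul, ← Units.val_mul, mul_inv_cancel, Units.val_one]
  have hab : a - b = -1 := uA_sub_uB m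
  have hcast : ((2 * m + 1 : ℤ) : ZInv m) = a + b := by
    rw [show a = iz m m from uA_val m, show b = iz m (m + 1) from uB_val m, ← map_add,
      eq_intCast (iz m)]
    push_cast
    ring
  refine ⟨-nin, ?_⟩
  rw [hcast]
  linear_combination (x' - x) * hnin + (a * nin) * hw + (-(b * nin)) * hw' + (nin * (a + b)) * hab

theorem dvd_zpow_sub {R : Type*} [CommRing R] (x : Rˣ) (d : R)
    (h : d ∣ (x : R) - ((x⁻¹ : Rˣ) : R)) (n : ℤ) :
    d ∣ ((x ^ n : Rˣ) : R) - ((x ^ (-n) : Rˣ) : R) := by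
  have key : ∀ k : ℕ, d ∣ ((x ^ (k : ℤ) : Rˣ) : R) - ((x ^ (-(k : ℤ)) : Rˣ) : R) := by
    intro k
    induction k with
    | zero => simp
    | succ k ih =>
      have e1 : ((x ^ (((k : ℤ)) + 1) : Rˣ) : R) = ((x ^ (k : ℤ) : Rˣ) : R) * (x : R) := by
        rw [zpow_add, zpow_one, Units.val_mul]
      have e2 : ((x ^ (-((k : ℤ) + 1)) : Rˣ) : R)
          = ((x ^ (-(k : ℤ)) : Rˣ) : R) * ((x⁻¹ : Rˣ) : R) := by
        rw [show -((k : ℤ) + 1) = -(k : ℤ) + (-1) by ring, zpow_add, Units.val_mul]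
        congr 1
        rw [zpow_neg, zpow_one]
      have hcast : ((k : ℕ) + 1 : ℤ) = ((k : ℤ) + 1) := by push_cast; ring
      rw [show (((k : ℕ) + 1 : ℕ) : ℤ) = ((k : ℤ) + 1) by push_cast; ring]
      rw [e1, e2]
      have hd := dvd_add (ih.mul_right ((x : R))) (h.mul_right (((x ^ (-(k : ℤ)) : Rˣ) : R)))
      convert hd using 1
      ring
  rcases le_or_gt 0 n with hn | hn
  · obtain ⟨k, rfl⟩ := Int.eq_ofNat_of_zero_le hn
    exact key k
  · obtain ⟨k, rfl⟩ : ∃ k : ℕ, n = -(k : ℤ) := ⟨n.natAbs, by omega⟩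
    rw [neg_neg]
    exact dvd_sub_comm.mp (key k)

/-- divisibility of the difference of the two evaluations -/
theorem dvd_diff (f : LaurentPolynomial ℤ) :
    ((2 * m + 1 : ℤ) : ZInv m) ∣ evalU (wU m)⁻¹ f - evalU (wU m) f := by
  induction f using LaurentPolynomial.induction_on' with
  | add p q hp hq =>
    have h := dvd_add hp hq
    rw [map_add, map_add]
    convert h using 1
    ring
  | C_mul_T n a =>
    rw [map_mul, map_mul, evalU_C, evalU_C, evalU_T, evalU_T, ← mul_sub]
    refine Dvd.dvd.mul_left ?_ _
    have h := dvd_zpow_sub (wU m) _ (dvd_w_sub_winv m) (-n)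
    rw [neg_neg] at h
    have e : (((wU m)⁻¹ ^ n : (ZInv m)ˣ) : ZInv m) = ((wU m ^ (-n) : (ZInv m)ˣ) : ZInv m) := by
      rw [inv_zpow, ← zpow_neg]
    rw [e]
    exact h

theorem evalU_toLaurent_Apoly_w : evalU (wU m) ((Apoly m).toLaurent) = 0 := by
  simp only [Apoly, map_sub, map_mul, Polynomial.toLaurent_C, Polynomial.toLaurent_X,
    evalU_C, evalU_T, zpow_one]
  have hw := w_mul_b m
  rw [uA_val, uB_val, eq_intCast (iz m), eq_intCast (iz m)] at hw
  push_cast at hw ⊢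
  linear_combination hw

theorem evalU_toLaurent_Apoly_winv :
    evalU (wU m)⁻¹ ((Apoly m).toLaurent) * ((m : ℤ) : ZInv m) = ((2 * m + 1 : ℤ) : ZInv m) := by
  simp only [Apoly, map_sub, map_mul, Polynomial.toLaurent_C, Polynomial.toLaurent_X,
    evalU_C, evalU_T, zpow_one]
  have hw := winv_mul m
  rw [uA_val, uB_val, eq_intCast (iz m), eq_intCast (iz m)] at hw
  push_cast at hw ⊢
  linear_combination ((m : ZInv m) + 1) * hw

/-- surjectivity onto the subring `S` of pairs. -/
theorem pair_surj (a b : ZInv m)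
    (h : ((2 * m + 1 : ℤ) : ZInv m) ∣ b - a) :
    ∃ x : Lam (m * (m + 1)), psi m x = a ∧ psi' m x = b := by
  obtain ⟨f1, hf1⟩ := evalU_w_surjective m a
  have hdvd2 : ((2 * m + 1 : ℤ) : ZInv m) ∣ b - evalU (wU m)⁻¹ f1 := by
    have h2 := dvd_sub h (dvd_diff m f1)
    convert h2 using 1
    rw [hf1]
    ring
  obtain ⟨e, he⟩ := hdvd2
  obtain ⟨g, hg⟩ := evalU_winv_surjective m (((m : ℤ) : ZInv m) * e)
  refine ⟨Qmk _ (f1 + (Apoly m).toLaurent * g), ?_, ?_⟩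
  · rw [psi_mk, map_add, map_mul, evalU_toLaurent_Apoly_w, zero_mul, add_zero, hf1]
  · rw [psi'_mk, map_add, map_mul, hg]
    have h3 : evalU (wU m)⁻¹ ((Apoly m).toLaurent) * (((m : ℤ) : ZInv m) * e)
        = b - evalU (wU m)⁻¹ f1 := by
      rw [← mul_assoc, evalU_toLaurent_Apoly_winv, ← he]
    rw [h3]
    ring

end MSect2

section Ext

open LaurentPolynomial

/-- Ring homomorphisms out of `Λₙ` are determined by the image of `t`. -/
theorem lamHom_ext {n : ℤ} {S : Type*} [CommRing S] {f g : Lam n →+* S}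
    (h : f (Qmk n (T 1)) = g (Qmk n (T 1))) : f = g := by
  have hmul : (Qmk n (T 1)) * (Qmk n (T (-1))) = 1 := by
    rw [← map_mul, ← T_add]
    norm_num
  have h1 : f (Qmk n (T 1)) * f (Qmk n (T (-1))) = 1 := by rw [← map_mul, hmul, map_one]
  have h2 : g (Qmk n (T 1)) * g (Qmk n (T (-1))) = 1 := by rw [← map_mul, hmul, map_one]
  have hneg : f (Qmk n (T (-1))) = g (Qmk n (T (-1))) := by
    calc f (Qmk n (T (-1)))
        = f (Qmk n (T (-1))) * (g (Qmk n (T 1)) * g (Qmk n (T (-1)))) := by rw [h2, mul_one]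
    _ = (f (Qmk n (T 1)) * f (Qmk n (T (-1)))) * g (Qmk n (T (-1))) := by rw [← h]; ring
    _ = g (Qmk n (T (-1))) := by rw [h1, one_mul]
  refine Ideal.Quotient.ringHom_ext (laurentHom_ext ?_ ?_)
  · simpa using h
  · simpa using hneg

end Ext


end S17

set_option maxHeartbeats 1000000 in
/-- for reducible `Δₙ`, `n = m(m+1)` with `m ≥ 1`, the ring homomorphism
`Λₙ → ℤ[1/n]` given by `t ↦ m/(m+1)` maps the set of unitary units of `Λₙ` bijectively
onto `T = {x ∈ ℤ[1/n]ˣ : x - x⁻¹ ∈ (2m+1)·ℤ[1/n]}`. -/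
theorem stmt17 (m : ℤ) (hm : 1 ≤ m)
    (τ : Lam (m * (m + 1)) →+* Lam (m * (m + 1)))
    (hτ : τ (Qmk (m * (m + 1)) (LaurentPolynomial.T 1)) =
      Qmk (m * (m + 1)) (LaurentPolynomial.T (-1))) :
    ∃ ψ : Lam (m * (m + 1)) →+* ZInv m,
      ψ (Qmk (m * (m + 1)) (LaurentPolynomial.T 1)) =
        algebraMap ℤ (ZInv m) m * Ring.inverse (algebraMap ℤ (ZInv m) (m + 1)) ∧
      Set.BijOn ψ {x : Lam (m * (m + 1)) | x * τ x = 1}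
        {y : ZInv m | IsUnit y ∧
          ∃ c : ZInv m, y - Ring.inverse y = algebraMap ℤ (ZInv m) (2 * m + 1) * c} := by
  classical
  have hτψ : (S17.psi m).comp τ = S17.psi' m := by
    apply S17.lamHom_ext
    rw [RingHom.comp_apply, hτ, S17.psi_mk, S17.psi'_mk, S17.evalU_T, S17.evalU_T,
      zpow_neg, zpow_one, zpow_one]
  have hτψ' : (S17.psi' m).comp τ = S17.psi m := by
    apply S17.lamHom_ext
    rw [RingHom.comp_apply, hτ, S17.psi_mk, S17.psi'_mk, S17.evalU_T, S17.evalU_T,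
      zpow_neg, zpow_one, zpow_one, inv_inv]
  have hψτ : ∀ x, S17.psi m (τ x) = S17.psi' m x := fun x => RingHom.congr_fun hτψ x
  have hψ'τ : ∀ x, S17.psi' m (τ x) = S17.psi m x := fun x => RingHom.congr_fun hτψ' x
  have hunit : ∀ x : Lam (m * (m + 1)), x * τ x = 1 → S17.psi m x * S17.psi' m x = 1 := by
    intro x hx
    have h := congrArg (S17.psi m) hx
    rw [map_mul, map_one, hψτ x] at h
    exact h
  have hinv_eq : ∀ x : Lam (m * (m + 1)), x * τ x = 1 →
      Ring.inverse (S17.psi m x) = S17.psi' m x := by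
    intro x hx
    have h1 := hunit x hx
    have hu : IsUnit (S17.psi m x) := IsUnit.of_mul_eq_one _ h1
    calc Ring.inverse (S17.psi m x)
        = Ring.inverse (S17.psi m x) * (S17.psi m x * S17.psi' m x) := by rw [h1, mul_one]
    _ = (Ring.inverse (S17.psi m x) * S17.psi m x) * S17.psi' m x := by ring
    _ = S17.psi' m x := by rw [Ring.inverse_mul_cancel _ hu, one_mul]
  have hdiff : ∀ x : Lam (m * (m + 1)), ∃ c, S17.psi' m x - S17.psi m x
      = algebraMap ℤ (ZInv m) (2 * m + 1) * c := by
    intro x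
    obtain ⟨f, rfl⟩ := Ideal.Quotient.mk_surjective x
    obtain ⟨c, hc⟩ := S17.dvd_diff m f
    refine ⟨c, ?_⟩
    rw [eq_intCast (algebraMap ℤ (ZInv m))]
    exact hc
  refine ⟨S17.psi m, ?_, ?_, ?_, ?_⟩
  · rw [S17.psi_mk, S17.evalU_T, zpow_one, S17.wU_val, S17.uA_val, ← S17.uB_val,
      Ring.inverse_unit]
  · intro x hx
    simp only [Set.mem_setOf_eq] at hx ⊢
    have h1 := hunit x hx
    refine ⟨IsUnit.of_mul_eq_one _ h1, ?_⟩
    obtain ⟨c, hc⟩ := hdiff x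
    refine ⟨-c, ?_⟩
    rw [hinv_eq x hx]
    linear_combination -hc
  · intro x hx y hy hxy
    simp only [Set.mem_setOf_eq] at hx hy
    have h2 : S17.psi' m x = S17.psi' m y := by
      rw [← hinv_eq x hx, ← hinv_eq y hy, hxy]
    exact S17.psi_inj m hm x y hxy h2
  · intro y hy
    obtain ⟨hyu, c, hc⟩ := hy
    rw [eq_intCast (algebraMap ℤ (ZInv m))] at hc
    have hdvd : ((2 * m + 1 : ℤ) : ZInv m) ∣ Ring.inverse y - y := by
      refine ⟨-c, ?_⟩
      linear_combination -hc
    obtain ⟨x, hx1, hx2⟩ := S17.pair_surj m y (Ring.inverse y) hdvd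
    refine ⟨x, ?_, hx1⟩
    simp only [Set.mem_setOf_eq]
    refine S17.psi_inj m hm (x * τ x) 1 ?_ ?_
    · rw [map_mul, map_one, hψτ x, hx1, hx2, Ring.mul_inverse_cancel _ hyu]
    · rw [map_mul, map_one, hψ'τ x, hx1, hx2, Ring.inverse_mul_cancel _ hyu]
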